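/- Let ξ be a root of ξ³ + 2ξt₃ + t₂ = 0 depending holomorphically on (t₂,t₃) where the discriminant is nonzero, and let f = (3/4)ξt₂ + (1/2)ξ²t₃. Then ∂f/∂t₂ = ξ and ∂f/∂t₃ = ξ². -/

import Mathlib

/-- (`A₃` case) Let `ξ` be a holomorphic root of `ξ³ + 2ξt₃ + t₂ = 0` on an open set
where the discriminant `27t₂² + 32t₃³` is nonzero, and let
`f = (3/4)ξt₂ + (1/2)ξ²t₃`. Then `∂f/∂t₂ = ξ` and `∂f/∂t₃ = ξ²`. -/
theorem A3_potential_derivatives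
    (U : Set (ℂ × ℂ)) (hU : IsOpen U) (ξ : ℂ × ℂ → ℂ)
    (hξ : ∀ p ∈ U, DifferentiableAt ℂ ξ p)
    (heq : ∀ p ∈ U, (ξ p) ^ 3 + 2 * ξ p * p.2 + p.1 = 0)
    (hdisc : ∀ p ∈ U, 27 * p.1 ^ 2 + 32 * p.2 ^ 3 ≠ 0) :
    ∀ p ∈ U,
      fderiv ℂ (fun q : ℂ × ℂ => (3 / 4) * ξ q * q.1 + (1 / 2) * (ξ q) ^ 2 * q.2) p (1, 0)
        = ξ p ∧
      fderiv ℂ (fun q : ℂ × ℂ => (3 / 4) * ξ q * q.1 + (1 / 2) * (ξ q) ^ 2 * q.2) p (0, 1)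
        = (ξ p) ^ 2 := by
  intro p hp
  have hxd : HasFDerivAt ξ (fderiv ℂ ξ p) p := (hξ p hp).hasFDerivAt
  set L := fderiv ℂ ξ p with hL
  set x := ξ p with hx
  -- derivative of the defining equation
  have hg := (((hxd.mul hxd).mul hxd).add
      ((hxd.const_mul 2).mul hasFDerivAt_snd)).add
      hasFDerivAt_fst
  have hg0 : HasFDerivAt (fun q : ℂ × ℂ => ξ q * ξ q * ξ q + 2 * ξ q * q.2 + q.1)
      (0 : (ℂ × ℂ) →L[ℂ] ℂ) p := by
    apply (hasFDerivAt_const (0:ℂ) p).congr_of_eventuallyEq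
    filter_upwards [hU.mem_nhds hp] with q hq
    have := heq q hq
    linear_combination this
  have hGeq := hg.unique hg0
  have e1 : (3 * x ^ 2 + 2 * p.2) * L (1, 0) + 1 = 0 := by
    have h := congrArg (fun T : (ℂ × ℂ) →L[ℂ] ℂ => T (1, 0)) hGeq
    simp at h
    linear_combination h
  have e2 : (3 * x ^ 2 + 2 * p.2) * L (0, 1) + 2 * x = 0 := by
    have h := congrArg (fun T : (ℂ × ℂ) →L[ℂ] ℂ => T (0, 1)) hGeq
    simp at h
    linear_combination h
  -- nonvanishing of 3x^2 + 2 t3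
  have hc : (3 * x ^ 2 + 2 * p.2) ≠ 0 := by
    intro hc0
    apply hdisc p hp
    have h1 := heq p hp
    have ht3 : 2 * p.2 = -(3 * x ^ 2) := by linear_combination hc0
    have ht2 : p.1 = 2 * x ^ 3 := by linear_combination h1 - x * ht3
    linear_combination 27 * (p.1 + 2 * x ^ 3) * ht2 +
      (16 * p.2 ^ 2 - 24 * x ^ 2 * p.2 + 36 * x ^ 4) * ht3
  -- derivative of f
  have hfe : (fun q : ℂ × ℂ => (3 / 4) * ξ q * q.1 + (1 / 2) * (ξ q) ^ 2 * q.2)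
      = (fun q : ℂ × ℂ => (3 / 4) * ξ q * q.1 + (1 / 2) * (ξ q * ξ q) * q.2) := by
    funext q; ring
  have hf := ((hxd.const_mul (3/4 : ℂ)).mul hasFDerivAt_fst).add
      (((hxd.mul hxd).const_mul (1/2 : ℂ)).mul hasFDerivAt_snd)
  rw [hfe]
  have hfd : fderiv ℂ (fun q : ℂ × ℂ => (3 / 4) * ξ q * q.1 + (1 / 2) * (ξ q * ξ q) * q.2) p = _ :=
    hf.fderiv
  rw [hfd]
  constructor
  · have h1 := heq p hp
    simp only [ContinuousLinearMap.add_apply, ContinuousLinearMap.smul_apply,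
      ContinuousLinearMap.coe_fst', ContinuousLinearMap.coe_snd', smul_eq_mul]
    simp only [← hx]
    apply mul_left_cancel₀ hc
    ring_nf
    linear_combination ((3/4)*p.1 + p.2*x) * e1 - (3/4) * (heq p hp)
  · simp only [ContinuousLinearMap.add_apply, ContinuousLinearMap.smul_apply,
      ContinuousLinearMap.coe_fst', ContinuousLinearMap.coe_snd', smul_eq_mul, Pi.mul_apply]
    simp only [← hx]
    apply mul_left_cancel₀ hc
    ring_nf
    linear_combination ((3/4)*p.1 + p.2*x) * e2 - (3/2) * x * (heq p hp)
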